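/- Robustness via a dominating probability interval: Let T be a finite training set of labeled examples over 𝒳 × Fin k and n < |T|. Suppose there is a class i such that for every class j ≠ i, max(0, cᵢ(T) − n) / |T| > cⱼ(T) / (|T| − n) (the abstract probability interval of class i dominates those of all other classes). Then for every T' ∈ Δₙ(T) and every j ≠ i, pᵢ(T') > pⱼ(T'); in particular, class i is the unique most-probable class of every training set in Δₙ(T), so the classification produced from this state is robust to n-poisoning. -/

import Mathlib

/-- The n-poisoning perturbed set: all subsets of `T` missing at most `n` elements. -/
def Perturb {α : Type*} [DecidableEq α] (T : Finset α) (n : ℕ) : Set (Finset α) :=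
  {T' | T' ⊆ T ∧ (T \ T').card ≤ n}

variable {X : Type*} [DecidableEq X] {k : ℕ}

/-- `cnt T i` is the number of elements of `T` with class label `i`. -/
def cnt (T : Finset (X × Fin k)) (i : Fin k) : ℕ :=
  (T.filter fun e => e.2 = i).card

/-- The class probability `pᵢ(T) = cᵢ(T) / |T|`. -/
noncomputable def cprob (T : Finset (X × Fin k)) (i : Fin k) : ℝ :=
  (cnt T i : ℝ) / (T.card : ℝ)

/-- Robustness via a dominating probability interval: if `n < |T|` and the lower
endpoint `max(0, cᵢ(T) − n) / |T|` of class `i`'s abstract probability interval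
exceeds the upper endpoint `cⱼ(T) / (|T| − n)` of every other class `j`'s
interval, then class `i` is strictly most probable for every `T' ∈ Δₙ(T)`:
the classification is robust to n-poisoning. -/
theorem dominating_interval_robust (hk : 1 ≤ k) (T : Finset (X × Fin k)) (n : ℕ)
    (hn : n < T.card) (i : Fin k)
    (hdom : ∀ j : Fin k, j ≠ i →
      (cnt T j : ℝ) / ((T.card : ℝ) - (n : ℝ)) <
        max 0 ((cnt T i : ℝ) - (n : ℝ)) / (T.card : ℝ)) :
    ∀ T' ∈ Perturb T n, ∀ j : Fin k, j ≠ i → cprob T' j < cprob T' i := by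
  rintro T' ⟨hsub, hcard⟩ j hj
  have hTpos : (0:ℝ) < (T.card : ℝ) := by exact_mod_cast Nat.zero_lt_of_lt hn
  have hNn : (0:ℝ) < (T.card : ℝ) - (n : ℝ) := by
    have : (n:ℝ) < (T.card:ℝ) := by exact_mod_cast hn
    linarith
  have hd := hdom j hj
  -- first: cnt T i > n
  have hbn : (n:ℝ) < (cnt T i : ℝ) := by
    by_contra h
    push_neg at h
    have hmax : max 0 ((cnt T i : ℝ) - (n:ℝ)) = 0 := by
      rw [max_eq_left]; linarith
    rw [hmax] at hd
    have : (0:ℝ) ≤ (cnt T j : ℝ) / ((T.card : ℝ) - (n : ℝ)) := by positivity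
    simp at hd
    linarith
  have hmax : max 0 ((cnt T i : ℝ) - (n:ℝ)) = (cnt T i : ℝ) - (n:ℝ) := by
    rw [max_eq_right]; linarith
  rw [hmax] at hd
  -- deduce cnt T j + n < cnt T i
  have key : (cnt T j : ℝ) + (n:ℝ) < (cnt T i : ℝ) := by
    have h1 : (cnt T j : ℝ) * (T.card : ℝ) <
        ((cnt T i : ℝ) - (n:ℝ)) * ((T.card : ℝ) - (n:ℝ)) := by
      rw [div_lt_div_iff₀ hNn hTpos] at hd
      linarith
    have h2 : ((cnt T i : ℝ) - (n:ℝ)) * ((T.card : ℝ) - (n:ℝ)) ≤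
        ((cnt T i : ℝ) - (n:ℝ)) * (T.card : ℝ) := by
      apply mul_le_mul_of_nonneg_left _ (by linarith)
      have : (0:ℝ) ≤ (n:ℝ) := by positivity
      linarith
    have h3 : (cnt T j : ℝ) * (T.card : ℝ) < ((cnt T i : ℝ) - (n:ℝ)) * (T.card : ℝ) :=
      lt_of_lt_of_le h1 h2
    have := (mul_lt_mul_iff_of_pos_right hTpos).mp h3
    linarith
  have keyN : cnt T j + n < cnt T i := by exact_mod_cast key
  -- cnt T' j ≤ cnt T j
  have hle : cnt T' j ≤ cnt T j := Finset.card_le_card (Finset.filter_subset_filter _ hsub)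
  -- cnt T i ≤ cnt T' i + n
  have hge : cnt T i ≤ cnt T' i + n := by
    have hsub2 : T.filter (fun e => e.2 = i) ⊆
        (T'.filter (fun e => e.2 = i)) ∪ (T \ T') := by
      intro e he
      simp only [Finset.mem_filter, Finset.mem_union, Finset.mem_sdiff] at *
      by_cases h : e ∈ T'
      · exact Or.inl ⟨h, he.2⟩
      · exact Or.inr ⟨he.1, h⟩
    calc cnt T i ≤ ((T'.filter (fun e => e.2 = i)) ∪ (T \ T')).card :=
          Finset.card_le_card hsub2
      _ ≤ cnt T' i + (T \ T').card := Finset.card_union_le _ _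
      _ ≤ cnt T' i + n := by omega
  have hlt : cnt T' j < cnt T' i := by omega
  -- |T'| > 0
  have hT'pos : 0 < T'.card := by
    have := Finset.card_sdiff_add_card_eq_card hsub
    omega
  have hT'posR : (0:ℝ) < (T'.card : ℝ) := by exact_mod_cast hT'pos
  unfold cprob
  exact (div_lt_div_iff_of_pos_right hT'posR).mpr (by exact_mod_cast hlt)
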